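/- Fix a = 1/m with m a positive integer, and consider the sequences (h_n, a_n, α_n) defined by the strip-crossing recurrences with initial data a_0 = a, α_0 ∈ {0, 1}, and h_0 = ℓ·a where 2ℓ is a positive integer with ℓ ≥ 1. Then for every n ∈ ℕ: a_n = a and h_n is a half-integer multiple of a, i.e. 2·h_n / a ∈ ℤ. -/

import Mathlib

/-- One step of the strip-crossing recurrences: from the triple `(h_n, a_n, α_n)`
compute `γ_n = ⌊(1 − a_n)/a⌋`, `β_n = a·frac((1 − a_n)/a)`, and then
`h_{n+1} = −(h_n + (−1)^{α_n}·(a_n + (−1)^{γ_n+1}·β_n − (1 − (−1)^{γ_n})·a/2))`,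
`α_{n+1} = (α_n + γ_n + 1 + ⌊(2|h_{n+1}| + β_n)/a⌋) mod 2`,
`a_{n+1} = a·(1 − frac((2|h_{n+1}| + β_n)/a))`. -/
noncomputable def stripStep (a : ℝ) (s : ℝ × ℝ × ℤ) : ℝ × ℝ × ℤ :=
  let h := s.1
  let an := s.2.1
  let α := s.2.2
  let γ : ℤ := ⌊(1 - an) / a⌋
  let β : ℝ := a * Int.fract ((1 - an) / a)
  let h' : ℝ :=
    -(h + (-1 : ℝ) ^ α * (an + (-1 : ℝ) ^ (γ + 1) * β - (1 - (-1 : ℝ) ^ γ) * a / 2))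
  let α' : ℤ := (α + γ + 1 + ⌊(2 * |h'| + β) / a⌋) % 2
  let a' : ℝ := a * (1 - Int.fract ((2 * |h'| + β) / a))
  (h', a', α')

lemma neg_one_zpow_int (α : ℤ) : ∃ k : ℤ, ((-1 : ℝ) ^ α = (k : ℝ)) ∧ (k = 1 ∨ k = -1) := by
  rcases Int.even_or_odd α with he | ho
  · exact ⟨1, by rw [he.neg_one_zpow]; norm_num, Or.inl rfl⟩
  · exact ⟨-1, by rw [ho.neg_one_zpow]; norm_num, Or.inr rfl⟩

lemma stripStep_key (m : ℕ) (hm : 0 < m) (a : ℝ) (ha : a = 1 / (m : ℝ))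
    (s : ℝ × ℝ × ℤ) (h1 : s.2.1 = a) (h2 : ∃ j : ℤ, 2 * s.1 / a = (j : ℝ)) :
    (stripStep a s).2.1 = a ∧ ∃ j : ℤ, 2 * (stripStep a s).1 / a = (j : ℝ) := by
  obtain ⟨h, an, α⟩ := s
  simp only at h1
  subst h1
  obtain ⟨j, hj⟩ := h2
  have hm' : (m : ℝ) ≠ 0 := Nat.cast_ne_zero.mpr hm.ne'
  have hapos : 0 < an := by rw [ha]; positivity
  have hane : an ≠ 0 := hapos.ne'
  have hinv : (1 - an) / an = (((m : ℤ) - 1 : ℤ) : ℝ) := by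
    rw [ha]; push_cast; field_simp
  have hfr : Int.fract ((1 - an) / an) = 0 := by rw [hinv, Int.fract_intCast]
  have hfl : ⌊(1 - an) / an⌋ = (m : ℤ) - 1 := by rw [hinv, Int.floor_intCast]
  obtain ⟨k1, hk1, _⟩ := neg_one_zpow_int α
  obtain ⟨k2, hk2, _⟩ := neg_one_zpow_int ((m : ℤ) - 1)
  have hfst : (stripStep an (h, an, α)).1 =
      -(h + (-1 : ℝ) ^ α * (an + (-1 : ℝ) ^ (⌊(1 - an) / an⌋ + 1) * (an * Int.fract ((1 - an) / an))
        - (1 - (-1 : ℝ) ^ ⌊(1 - an) / an⌋) * an / 2)) := rfl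
  rw [hfr, hfl, hk1, hk2] at hfst
  have hh : 2 * h = (j : ℝ) * an := by
    field_simp at hj; linarith [hj]
  set j' : ℤ := -(j + k1 * (1 + k2)) with hj'def
  have hmain : 2 * (stripStep an (h, an, α)).1 / an = (j' : ℝ) := by
    rw [hfst, hj'def]
    push_cast
    field_simp
    linear_combination -hh
  refine ⟨?_, j', hmain⟩
  have habs : (2 * |(stripStep an (h, an, α)).1| + an * Int.fract ((1 - an) / an)) / an
      = ((|j'| : ℤ) : ℝ) := by
    rw [hfr, mul_zero, add_zero]
    have h2 : 2 * |(stripStep an (h, an, α)).1| / an = |2 * (stripStep an (h, an, α)).1 / an| := by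
      rw [abs_div, abs_of_pos hapos, abs_mul]
      norm_num
    push_cast
    rw [h2, hmain]
  have hsnd : (stripStep an (h, an, α)).2.1 =
      an * (1 - Int.fract ((2 * |(stripStep an (h, an, α)).1|
        + an * Int.fract ((1 - an) / an)) / an)) := rfl
  rw [hsnd, habs, Int.fract_intCast]
  ring

/-- For `a = 1/m` with `m` a positive integer, initial data `a₀ = a`, `α₀ ∈ {0, 1}`,
and `h₀ = ℓ·a` with `2ℓ` a positive integer and `ℓ ≥ 1`, every `a_n` equals `a` and
every `h_n` is a half-integer multiple of `a`. -/
theorem stripStep_half_integer (m : ℕ) (hm : 0 < m) (a : ℝ) (ha : a = 1 / (m : ℝ))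
    (α₀ : ℤ) (hα₀ : α₀ = 0 ∨ α₀ = 1)
    (ℓ : ℝ) (hℓ : 1 ≤ ℓ) (hℓint : ∃ j : ℤ, 0 < j ∧ 2 * ℓ = (j : ℝ))
    (h₀ : ℝ) (hh₀ : h₀ = ℓ * a) :
    ∀ n : ℕ, ((stripStep a)^[n] (h₀, a, α₀)).2.1 = a ∧
      ∃ j : ℤ, 2 * ((stripStep a)^[n] (h₀, a, α₀)).1 / a = (j : ℝ) := by
  have hm' : (m : ℝ) ≠ 0 := Nat.cast_ne_zero.mpr hm.ne'
  have hapos : 0 < a := by rw [ha]; positivity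
  have hane : a ≠ 0 := hapos.ne'
  intro n
  induction n with
  | zero =>
    refine ⟨rfl, ?_⟩
    obtain ⟨j, _, hj⟩ := hℓint
    refine ⟨j, ?_⟩
    simp only [Function.iterate_zero, id_eq]
    rw [hh₀]
    have : 2 * (ℓ * a) / a = 2 * ℓ := by field_simp
    rw [this, hj]
  | succ n ih =>
    rw [Function.iterate_succ_apply']
    exact stripStep_key m hm a ha _ ih.1 ih.2
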